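/- Let k ≥ 2 and let (x_n)_{n≥1} ⊆ [0,1] have Poissonian k-th order correlations. Then for every s > 0, the k-th factorial moment I_k(s,N) = ∫_0^1 F(t,s,N)·(F(t,s,N)−1)···(F(t,s,N)−(k−1)) dt satisfies lim_{N→∞} I_k(s,N) = s^k. -/

import Mathlib

open Finset Filter MeasureTheory
open scoped Classical ENNReal NNReal

/-- Distance from `x` to the nearest integer. -/
noncomputable def nint (x : ℝ) : ℝ := |x - round x|

/-- Signed distance from `x` to the origin modulo 1. -/
noncomputable def sdist (x : ℝ) : ℝ :=
  if Int.fract x ≤ 1 / 2 then Int.fract x else Int.fract x - 1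

/-- Number of `k`-tuples of pairwise distinct indices in `{1,…,N}` whose rescaled signed
differences lie in the box `∏ r, [a r, b r]`. -/
noncomputable def corrBoxCount (x : ℕ → ℝ) (k N : ℕ) (a b : Fin (k - 1) → ℝ) : ℕ :=
  ((Fintype.piFinset fun _ : Fin k => Finset.Icc 1 N).filter fun i =>
    Function.Injective i ∧ ∀ r : Fin (k - 1),
      (N : ℝ) * sdist (x (i ⟨0, by have := r.2; omega⟩) - x (i ⟨r.1 + 1, by have := r.2; omega⟩))
        ∈ Set.Icc (a r) (b r)).card

/-- The sequence `x` (indexed by `n ≥ 1`) has Poissonian correlations of order `k`. -/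
def HasPoissonianCorr (x : ℕ → ℝ) (k : ℕ) : Prop :=
  ∀ a b : Fin (k - 1) → ℝ, (∀ r, a r ≤ b r) →
    Tendsto (fun N : ℕ => (corrBoxCount x k N a b : ℝ) / N) atTop
      (nhds (∏ r, (b r - a r)))

/-- The `k`-th order correlation function `R_k(s₁,…,s_{k-1},N)` (pairwise distinct indices). -/
noncomputable def Rcorr (x : ℕ → ℝ) (k N : ℕ) (s : Fin (k - 1) → ℝ) : ℝ :=
  (((Fintype.piFinset fun _ : Fin k => Finset.Icc 1 N).filter fun i =>
    Function.Injective i ∧ ∀ r : Fin (k - 1),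
      nint (x (i ⟨0, by have := r.2; omega⟩) - x (i ⟨r.1 + 1, by have := r.2; omega⟩))
        ≤ s r / N).card : ℝ) / N

/-- The `k`-th order correlation function `R_k^*(s₁,…,s_{k-1},N)` (indices not necessarily
distinct). -/
noncomputable def RcorrStar (x : ℕ → ℝ) (k N : ℕ) (s : Fin (k - 1) → ℝ) : ℝ :=
  (((Fintype.piFinset fun _ : Fin k => Finset.Icc 1 N).filter fun i =>
    ∀ r : Fin (k - 1),
      nint (x (i ⟨0, by have := r.2; omega⟩) - x (i ⟨r.1 + 1, by have := r.2; omega⟩))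
        ≤ s r / N).card : ℝ) / N

/-- `F(t,s,N)`: the number of `n ≤ N` with `‖x_n − t‖ ≤ s/(2N)`. -/
noncomputable def Fcnt (x : ℕ → ℝ) (s : ℝ) (N : ℕ) (t : ℝ) : ℕ :=
  ((Finset.Icc 1 N).filter fun n => nint (x n - t) ≤ s / (2 * N)).card

lemma nint_add_int (x : ℝ) (n : ℤ) : nint (x + n) = nint x := by
  unfold nint; rw [round_add_intCast]; push_cast; ring_nf

lemma nint_fract (x : ℝ) : nint (Int.fract x) = nint x := by
  conv_rhs => rw [← Int.fract_add_floor x]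
  rw [nint_add_int]

lemma nint_eq_min (x : ℝ) : nint x = min (Int.fract x) (1 - Int.fract x) := by
  rw [← nint_fract x]
  have h0 := Int.fract_nonneg x
  have h1 := Int.fract_lt_one x
  set f := Int.fract x with hf
  rcases lt_or_ge f (1/2) with hc | hc
  · have hr : round f = 0 := by
      rw [round_eq]
      exact Int.floor_eq_zero_iff.mpr ⟨by linarith, by linarith⟩
    rw [nint, hr]
    push_cast
    rw [sub_zero, abs_of_nonneg h0, min_eq_left (by linarith)]
  · have hr : round f = 1 := by
      rw [round_eq]
      have : (1:ℤ) ≤ ⌊f + 1/2⌋ := by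
        apply Int.le_floor.mpr; push_cast; linarith
      have h2 : ⌊f + 1/2⌋ < 2 := by
        apply Int.floor_lt.mpr; push_cast; linarith
      omega
    rw [nint, hr]
    push_cast
    rw [abs_of_nonpos (by linarith), min_eq_right (by linarith)]
    ring

lemma nint_nonneg (x : ℝ) : 0 ≤ nint x := abs_nonneg _

lemma nint_neg (x : ℝ) : nint (-x) = nint x := by
  rw [nint_eq_min, nint_eq_min]
  rcases eq_or_ne (Int.fract x) 0 with h | h
  · have h2 : Int.fract (-x) = 0 := by
      have : x = (⌊x⌋ : ℝ) := by
        have := Int.fract_add_floor x; rw [h] at this; linarith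
      rw [this, ← Int.cast_neg, Int.fract_intCast]
    rw [h, h2]
  · rw [Int.fract_neg h]
    rw [min_comm]
    ring_nf

lemma nint_eq_abs {x : ℝ} (h : |x| ≤ 1/2) : nint x = |x| := by
  rcases abs_le.mp h with ⟨h1, h2⟩
  rcases le_or_gt 0 x with h3 | h3
  · rw [nint_eq_min]
    rcases lt_or_eq_of_le h2 with h4 | h4
    · rw [Int.fract_eq_self.mpr ⟨h3, by linarith⟩, abs_of_nonneg h3,
        min_eq_left (by linarith)]
    · subst h4
      have : Int.fract ((1:ℝ)/2) = 1/2 := by norm_num [Int.fract]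
      rw [this, abs_of_nonneg (by norm_num : (0:ℝ) ≤ 1/2)]; norm_num
  · rw [← nint_neg, nint_eq_min, Int.fract_eq_self.mpr ⟨by linarith, by linarith⟩,
      abs_of_neg h3, min_eq_left (by linarith)]

lemma abs_sdist_le (x : ℝ) : |sdist x| ≤ 1/2 := by
  unfold sdist
  have h0 := Int.fract_nonneg x
  have h1 := Int.fract_lt_one x
  split <;> rw [abs_le] <;> constructor <;> linarith

lemma sdist_sub_int (x : ℝ) : ∃ n : ℤ, x - sdist x = n := by
  unfold sdist
  split
  · exact ⟨⌊x⌋, by rw [Int.self_sub_fract]⟩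
  · refine ⟨⌊x⌋ + 1, ?_⟩
    push_cast
    have := Int.self_sub_fract x
    linarith

lemma nint_congr_int {a b : ℝ} (n : ℤ) (h : a - b = n) : nint a = nint b := by
  have : a = b + n := by linarith
  rw [this, nint_add_int]

lemma nint_large {y : ℝ} (h1 : 1/2 < |y|) (h2 : |y| < 1) : nint y = 1 - |y| := by
  rcases le_or_gt 0 y with h3 | h3
  · rw [abs_of_nonneg h3] at *
    rw [nint_eq_min, Int.fract_eq_self.mpr ⟨h3, h2⟩, min_eq_right (by linarith)]
  · rw [abs_of_neg h3] at *
    rw [← nint_neg, nint_eq_min, Int.fract_eq_self.mpr ⟨by linarith, by linarith⟩,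
      min_eq_right (by linarith)]

lemma key_iff {δ d u : ℝ} (hδ : 0 < δ) (hδ' : δ ≤ 1/8) (hd : |d| ≤ 1/2) (hu : |u| ≤ δ) :
    nint (d + u) ≤ δ ↔ |d + u| ≤ δ := by
  rcases le_or_gt |d + u| (1/2) with h | h
  · rw [nint_eq_abs h]
  · have hy : |d + u| < 1 := by
      calc |d + u| ≤ |d| + |u| := abs_add_le _ _
      _ < 1 := by linarith
    rw [nint_large h hy]
    have habs : |d + u| ≤ |d| + |u| := abs_add_le _ _
    constructor <;> intro h' <;> linarith
    
lemma measurable_nint : Measurable nint := by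
  have : nint = fun x => min (Int.fract x) (1 - Int.fract x) := funext nint_eq_min
  rw [this]
  exact measurable_fract.min (measurable_const.sub measurable_fract)

lemma cast_descFactorial (n k : ℕ) :
    ((n.descFactorial k : ℕ) : ℝ) = ∏ j ∈ Finset.range k, ((n:ℝ) - j) := by
  induction k with
  | zero => simp
  | succ k ih =>
    rw [Nat.descFactorial_succ, Finset.prod_range_succ, ← ih]
    rcases lt_trichotomy n k with h | h | h
    · rw [Nat.descFactorial_eq_zero_iff_lt.mpr h]; simp
    · subst h; simp
    · push_cast [Nat.cast_sub h.le]
      ring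

lemma card_inj_tuples (k : ℕ) (S : Finset ℕ) :
    ((Fintype.piFinset fun _ : Fin k => S).filter fun i => Function.Injective i).card
      = S.card.descFactorial k := by
  classical
  have e : {i : Fin k → ℕ // i ∈ (Fintype.piFinset fun _ : Fin k => S).filter
        fun i => Function.Injective i} ≃ (Fin k ↪ {a : ℕ // a ∈ S}) :=
    { toFun := fun i => ⟨fun r => ⟨i.1 r, by
        have := i.2
        simp only [Finset.mem_filter, Fintype.mem_piFinset] at this
        exact this.1 r⟩, by
        intro a b h
        have hm := i.2
        simp only [Finset.mem_filter, Fintype.mem_piFinset] at hm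
        exact hm.2 (congrArg Subtype.val h)⟩
      invFun := fun e => ⟨fun r => (e r).1, by
        simp only [Finset.mem_filter, Fintype.mem_piFinset]
        exact ⟨fun r => (e r).2, fun a b h => e.injective (Subtype.ext h)⟩⟩
      left_inv := fun i => Subtype.ext rfl
      right_inv := fun e => by ext r; rfl }
  calc ((Fintype.piFinset fun _ : Fin k => S).filter fun i => Function.Injective i).card
      = Fintype.card {i : Fin k → ℕ // i ∈ (Fintype.piFinset fun _ : Fin k => S).filter
          fun i => Function.Injective i} := (Fintype.card_coe _).symm
    _ = Fintype.card (Fin k ↪ {a : ℕ // a ∈ S}) := Fintype.card_congr e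
    _ = (Fintype.card {a : ℕ // a ∈ S}).descFactorial (Fintype.card (Fin k)) :=
        Fintype.card_embedding_eq
    _ = S.card.descFactorial k := by rw [Fintype.card_coe, Fintype.card_fin]

lemma prod_eq_sum_tuples (x : ℕ → ℝ) (s : ℝ) (N k : ℕ) (t : ℝ) :
    ∏ j ∈ Finset.range k, ((Fcnt x s N t : ℝ) - j)
      = ∑ i ∈ (Fintype.piFinset fun _ : Fin k => Finset.Icc 1 N).filter
          (fun i => Function.Injective i),
          (if ∀ r : Fin k, nint (x (i r) - t) ≤ s / (2*N) then (1:ℝ) else 0) := by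
  classical
  rw [Finset.sum_boole, Finset.filter_filter]
  have hset : ((Fintype.piFinset fun _ : Fin k => Finset.Icc 1 N).filter
      fun i => Function.Injective i ∧ ∀ r : Fin k, nint (x (i r) - t) ≤ s / (2*N))
      = (Fintype.piFinset fun _ : Fin k =>
          (Finset.Icc 1 N).filter fun n => nint (x n - t) ≤ s / (2 * N)).filter
          fun i => Function.Injective i := by
    ext i
    simp only [Finset.mem_filter, Fintype.mem_piFinset, forall_and]
    tauto
  rw [hset, card_inj_tuples, Fcnt, cast_descFactorial]

lemma measurableSet_forall_fin {n : ℕ} {P : Fin n → ℝ → Prop}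
    (h : ∀ r, MeasurableSet {a : ℝ | P r a}) : MeasurableSet {a : ℝ | ∀ r, P r a} := by
  have heq : {a : ℝ | ∀ r, P r a} = ⋂ r, {a | P r a} := by ext a; simp
  rw [heq]; exact MeasurableSet.iInter h

lemma intervalIntegrable_ite {P : ℝ → Prop} [DecidablePred P]
    (hP : MeasurableSet {t | P t}) (a b : ℝ) :
    IntervalIntegrable (fun t => if P t then (1:ℝ) else 0) volume a b := by
  have heq : (fun t => if P t then (1:ℝ) else 0)
      = Set.indicator {t | P t} (fun _ => (1:ℝ)) := by
    ext t
    by_cases h : P t <;> simp [Set.indicator_apply, h, Set.mem_setOf_eq]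
  rw [heq, intervalIntegrable_iff]
  exact (MeasureTheory.integrableOn_const measure_Ioc_lt_top.ne).indicator hP

lemma tuple_integral (m N : ℕ) (hN : 0 < N) (s : ℝ) (hs : 0 < s)
    (hδ8 : s / (2*(N:ℝ)) ≤ 1/8) (y : Fin (m+1) → ℝ) :
    (∫ t in (0:ℝ)..1, if ∀ r : Fin (m+1), nint (y r - t) ≤ s / (2*(N:ℝ)) then (1:ℝ) else 0)
      = ∫ w in (-(s/2))..(s/2),
          (if ∀ r : Fin m, (N:ℝ) * sdist (y 0 - y r.succ) ∈ Set.Icc (-(s/2) - w) (s/2 - w)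
            then (1:ℝ) else 0) / N := by
  classical
  have hNpos : (0:ℝ) < N := by exact_mod_cast hN
  set δ := s / (2*(N:ℝ)) with hδdef
  have hδpos : 0 < δ := by positivity
  set f : ℝ → ℝ := fun t => if ∀ r : Fin (m+1), nint (y r - t) ≤ δ then (1:ℝ) else 0 with hf
  have hper : Function.Periodic f 1 := by
    intro t
    have hh : ∀ r : Fin (m+1), nint (y r - (t+1)) = nint (y r - t) := fun r => by
      have h2 : y r - (t+1) = (y r - t) + ((-1 : ℤ) : ℝ) := by push_cast; ring
      rw [h2, nint_add_int]
    simp only [hf, hh]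
  have step1 : (∫ t in (0:ℝ)..1, f t) = ∫ t in (y 0 - 1/2)..(y 0 - 1/2 + 1), f t := by
    have h := hper.intervalIntegral_add_eq 0 (y 0 - 1/2)
    rw [zero_add] at h
    exact h
  have step2 : (∫ t in (y 0 - 1/2)..(y 0 - 1/2 + 1), f t)
      = ∫ u in (-(1/2) : ℝ)..(1/2), f (u + y 0) := by
    rw [intervalIntegral.integral_comp_add_right f (y 0)]
    congr 1 <;> ring
  set d : Fin m → ℝ := fun r => sdist (y 0 - y r.succ) with hd
  have hdle : ∀ r, |d r| ≤ 1/2 := fun r => abs_sdist_le _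
  have hnint_eq : ∀ (r : Fin m) (u : ℝ), nint (y r.succ - (u + y 0)) = nint (d r + u) := by
    intro r u
    obtain ⟨n, hn⟩ := sdist_sub_int (y 0 - y r.succ)
    have h1 : nint (y r.succ - (u + y 0)) = nint (-(d r + u)) := by
      apply nint_congr_int (-n)
      push_cast
      rw [← hn]
      show y r.succ - (u + y 0) - -(sdist (y 0 - y r.succ) + u) = -(y 0 - y r.succ - sdist (y 0 - y r.succ))
      ring
    rw [h1, nint_neg]
  have hcond : ∀ u : ℝ, |u| ≤ 1/2 →
      ((∀ r : Fin (m+1), nint (y r - (u + y 0)) ≤ δ) ↔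
        (|u| ≤ δ ∧ ∀ r : Fin m, |d r + u| ≤ δ)) := by
    intro u hu
    rw [Fin.forall_fin_succ]
    have h0 : nint (y 0 - (u + y 0)) = |u| := by
      have hh : y 0 - (u + y 0) = -u := by ring
      rw [hh, nint_neg, nint_eq_abs hu]
    rw [h0]
    constructor
    · rintro ⟨h1, h2⟩
      exact ⟨h1, fun r => (key_iff hδpos hδ8 (hdle r) h1).mp
        (by rw [← hnint_eq r u]; exact h2 r)⟩
    · rintro ⟨h1, h2⟩
      exact ⟨h1, fun r => by
        rw [hnint_eq r u]; exact (key_iff hδpos hδ8 (hdle r) h1).mpr (h2 r)⟩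
  set G : ℝ → ℝ := fun u => if ∀ r : Fin m, |d r + u| ≤ δ then (1:ℝ) else 0 with hG
  have step3 : (∫ u in (-(1/2) : ℝ)..(1/2), f (u + y 0))
      = ∫ u in (-(1/2) : ℝ)..(1/2), Set.indicator (Set.Icc (-δ) δ) G u := by
    apply intervalIntegral.integral_congr
    intro u hu
    rw [Set.uIcc_of_le (by norm_num : (-(1/2):ℝ) ≤ 1/2), Set.mem_Icc] at hu
    have hu2 : |u| ≤ 1/2 := abs_le.mpr hu
    simp only [hf, hG]
    rw [Set.indicator_apply]
    by_cases hc : u ∈ Set.Icc (-δ) δ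
    · rw [if_pos hc]
      have h3 : |u| ≤ δ := abs_le.mpr (Set.mem_Icc.mp hc)
      by_cases hq : ∀ r : Fin m, |d r + u| ≤ δ
      · rw [if_pos ((hcond u hu2).mpr ⟨h3, hq⟩), if_pos hq]
      · rw [if_neg (fun hh => hq ((hcond u hu2).mp hh).2), if_neg hq]
    · rw [if_neg hc,
        if_neg (fun hh => hc (Set.mem_Icc.mpr (abs_le.mp ((hcond u hu2).mp hh).1)))]
  have hsub : Set.Icc (-δ) δ ⊆ Set.Ioc (-(1/2):ℝ) (1/2) := by
    intro u hu
    rw [Set.mem_Icc] at hu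
    rw [Set.mem_Ioc]
    constructor <;> [linarith [hu.1]; linarith [hu.2]]
  have step4 : (∫ u in (-(1/2):ℝ)..(1/2), Set.indicator (Set.Icc (-δ) δ) G u)
      = ∫ u in (-δ)..δ, G u := by
    rw [intervalIntegral.integral_of_le (by norm_num : (-(1/2):ℝ) ≤ 1/2),
        intervalIntegral.integral_of_le (by linarith : -δ ≤ δ),
        ← MeasureTheory.integral_indicator measurableSet_Ioc,
        Set.indicator_indicator, Set.inter_eq_self_of_subset_right hsub,
        MeasureTheory.integral_indicator measurableSet_Icc,
        MeasureTheory.integral_Icc_eq_integral_Ioc]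
  have hNne : (N:ℝ) ≠ 0 := ne_of_gt hNpos
  have step5 : (∫ u in (-δ)..δ, G u) = (∫ w in (-(s/2))..(s/2), G (w / N)) / N := by
    have h := intervalIntegral.integral_comp_div (a := -(s/2)) (b := s/2) (c := (N:ℝ)) G hNne
    have ha : (-(s/2))/(N:ℝ) = -δ := by rw [hδdef]; field_simp
    have hb : (s/2)/(N:ℝ) = δ := by rw [hδdef]; field_simp
    rw [ha, hb] at h
    rw [h, smul_eq_mul]
    field_simp
  have hcond2 : ∀ (w : ℝ) (r : Fin m), (|d r + w / N| ≤ δ) ↔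
      ((N:ℝ) * d r ∈ Set.Icc (-(s/2) - w) (s/2 - w)) := by
    intro w r
    have hrw : d r + w / N = ((N:ℝ) * d r + w) / N := by
      rw [add_div, mul_div_cancel_left₀ _ hNne]
    have hNδ' : δ * N = s/2 := by
      rw [hδdef]
      field_simp
    rw [hrw, abs_div, abs_of_pos hNpos, div_le_iff₀ hNpos, hNδ', Set.mem_Icc, abs_le]
    constructor <;> rintro ⟨h1, h2⟩ <;> constructor <;> linarith
  have step6 : ∀ w : ℝ, G (w / N)
      = if ∀ r : Fin m, (N:ℝ) * sdist (y 0 - y r.succ) ∈ Set.Icc (-(s/2) - w) (s/2 - w)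
          then (1:ℝ) else 0 := by
    intro w
    simp only [hG]
    exact if_congr (forall_congr' fun r => hcond2 w r) rfl rfl
  calc (∫ t in (0:ℝ)..1, f t)
      = ∫ u in (-δ)..δ, G u := by rw [step1, step2, step3, step4]
    _ = (∫ w in (-(s/2))..(s/2), G (w / N)) / N := step5
    _ = ∫ w in (-(s/2))..(s/2),
          (if ∀ r : Fin m, (N:ℝ) * sdist (y 0 - y r.succ) ∈ Set.Icc (-(s/2) - w) (s/2 - w)
            then (1:ℝ) else 0) / N := by
        rw [← intervalIntegral.integral_div]
        apply intervalIntegral.integral_congr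
        intro w _
        simp only [step6]

lemma corrBox_as_sum (x : ℕ → ℝ) (m N : ℕ) (a b : ℝ) :
    ((corrBoxCount x (m+1) N (fun _ => a) (fun _ => b) : ℕ) : ℝ)
      = ∑ i ∈ (Fintype.piFinset fun _ : Fin (m+1) => Finset.Icc 1 N).filter
          (fun i => Function.Injective i),
          (if ∀ r : Fin m, (N:ℝ) * sdist (x (i 0) - x (i r.succ)) ∈ Set.Icc a b
            then (1:ℝ) else 0) := by
  classical
  rw [Finset.sum_boole, Finset.filter_filter]
  norm_cast

/-- If `(x_n)` has Poissonian `k`-th order correlations, then the `k`-th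
factorial moment `I_k(s,N) = ∫₀¹ F(F-1)⋯(F-(k-1)) dt` tends to `s^k`. -/
theorem factorial_moment_tendsto_pow
    (k : ℕ) (hk : 2 ≤ k) (x : ℕ → ℝ) (hx : ∀ n, x n ∈ Set.Icc (0 : ℝ) 1)
    (hP : HasPoissonianCorr x k) :
    ∀ s : ℝ, 0 < s →
      Tendsto (fun N : ℕ =>
          ∫ t in (0:ℝ)..1, ∏ j ∈ Finset.range k, ((Fcnt x s N t : ℝ) - (j : ℝ)))
        atTop (nhds (s ^ k)) := by
  intro s hs
  obtain ⟨m, rfl⟩ : ∃ m, k = m + 1 := ⟨k - 1, by omega⟩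
  classical
  set A : (N : ℕ) → Finset (Fin (m+1) → ℕ) := fun N =>
    (Fintype.piFinset fun _ : Fin (m+1) => Finset.Icc 1 N).filter
      (fun i => Function.Injective i) with hA
  have hmeas2 : ∀ (N : ℕ) (i : Fin (m+1) → ℕ),
      MeasurableSet {w : ℝ | ∀ r : Fin m,
        (N:ℝ) * sdist (x (i 0) - x (i r.succ)) ∈ Set.Icc (-(s/2) - w) (s/2 - w)} := by
    intro N i
    apply measurableSet_forall_fin
    intro r
    have heq : {w : ℝ | (N:ℝ) * sdist (x (i 0) - x (i r.succ)) ∈ Set.Icc (-(s/2) - w) (s/2 - w)}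
        = {w : ℝ | -(s/2) - w ≤ (N:ℝ) * sdist (x (i 0) - x (i r.succ))}
          ∩ {w : ℝ | (N:ℝ) * sdist (x (i 0) - x (i r.succ)) ≤ s/2 - w} := by
      ext w
      simp [Set.mem_Icc, Set.mem_setOf_eq]
    rw [heq]
    exact (measurableSet_le (measurable_const.sub measurable_id) measurable_const).inter
      (measurableSet_le measurable_const (measurable_const.sub measurable_id))
  have key : ∀ N : ℕ, 0 < N → s / (2*(N:ℝ)) ≤ 1/8 →
      (∫ t in (0:ℝ)..1, ∏ j ∈ Finset.range (m+1), ((Fcnt x s N t : ℝ) - (j:ℝ)))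
        = ∫ w in (-(s/2))..(s/2),
            ((corrBoxCount x (m+1) N (fun _ => -(s/2) - w) (fun _ => s/2 - w) : ℕ) : ℝ) / N := by
    intro N hN hd8
    have hmeas1 : ∀ i : Fin (m+1) → ℕ,
        MeasurableSet {t : ℝ | ∀ r : Fin (m+1), nint (x (i r) - t) ≤ s / (2*(N:ℝ))} := by
      intro i
      apply measurableSet_forall_fin
      intro r
      exact measurableSet_le (measurable_nint.comp (measurable_const.sub measurable_id))
        measurable_const
    calc (∫ t in (0:ℝ)..1, ∏ j ∈ Finset.range (m+1), ((Fcnt x s N t : ℝ) - (j:ℝ)))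
        = ∫ t in (0:ℝ)..1, ∑ i ∈ A N,
            (if ∀ r : Fin (m+1), nint (x (i r) - t) ≤ s / (2*(N:ℝ)) then (1:ℝ) else 0) := by
          apply intervalIntegral.integral_congr
          intro t _
          exact prod_eq_sum_tuples x s N (m+1) t
      _ = ∑ i ∈ A N, ∫ t in (0:ℝ)..1,
            (if ∀ r : Fin (m+1), nint (x (i r) - t) ≤ s / (2*(N:ℝ)) then (1:ℝ) else 0) :=
          intervalIntegral.integral_finset_sum
            (fun i _ => intervalIntegrable_ite (hmeas1 i) _ _)
      _ = ∑ i ∈ A N, ∫ w in (-(s/2))..(s/2),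
            (if ∀ r : Fin m,
                (N:ℝ) * sdist (x (i 0) - x (i r.succ)) ∈ Set.Icc (-(s/2) - w) (s/2 - w)
              then (1:ℝ) else 0) / N := by
          apply Finset.sum_congr rfl
          intro i _
          exact tuple_integral m N hN s hs hd8 (fun r => x (i r))
      _ = ∫ w in (-(s/2))..(s/2), ∑ i ∈ A N,
            (if ∀ r : Fin m,
                (N:ℝ) * sdist (x (i 0) - x (i r.succ)) ∈ Set.Icc (-(s/2) - w) (s/2 - w)
              then (1:ℝ) else 0) / N :=
          (intervalIntegral.integral_finset_sum
            (fun i _ => (intervalIntegrable_ite (hmeas2 N i) _ _).div_const _)).symm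
      _ = ∫ w in (-(s/2))..(s/2),
            ((corrBoxCount x (m+1) N (fun _ => -(s/2) - w) (fun _ => s/2 - w) : ℕ) : ℝ) / N := by
          apply intervalIntegral.integral_congr
          intro w _
          simp only [hA, ← Finset.sum_div]
          rw [← corrBox_as_sum x m N (-(s/2) - w) (s/2 - w)]
  have hle : (-(s/2) : ℝ) ≤ s/2 := by linarith
  obtain ⟨C, hC⟩ : ∃ C : ℝ, ∀ N : ℕ,
      ((corrBoxCount x (m+1) N (fun _ => -s) (fun _ => s) : ℕ) : ℝ)/N ≤ C := by
    have hB := hP (fun _ => -s) (fun _ => s) (fun r => by show (-s:ℝ) ≤ s; linarith)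
    obtain ⟨C, hC⟩ := hB.bddAbove_range
    exact ⟨C, fun N => hC (Set.mem_range_self N)⟩
  have hmono : ∀ (N : ℕ) (w : ℝ), w ∈ Set.Ioc (-(s/2)) (s/2) →
      ((corrBoxCount x (m+1) N (fun _ => -(s/2) - w) (fun _ => s/2 - w) : ℕ) : ℝ)/N
        ≤ ((corrBoxCount x (m+1) N (fun _ => -s) (fun _ => s) : ℕ) : ℝ)/N := by
    intro N w hw
    rw [Set.mem_Ioc] at hw
    have hcard : corrBoxCount x (m+1) N (fun _ => -(s/2) - w) (fun _ => s/2 - w)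
        ≤ corrBoxCount x (m+1) N (fun _ => -s) (fun _ => s) := by
      apply Finset.card_le_card
      apply Finset.monotone_filter_right
      rintro i _ ⟨h1, h2⟩
      refine ⟨h1, fun r => ?_⟩
      have h3 := h2 r
      simp only [Set.mem_Icc] at h3 ⊢
      constructor
      · linarith [h3.1, hw.2]
      · linarith [h3.2, hw.1]
    rcases Nat.eq_zero_or_pos N with h0 | h0
    · subst h0; simp
    · rw [div_le_div_iff_of_pos_right (by exact_mod_cast h0 : (0:ℝ) < N)]
      exact_mod_cast hcard
  have hlim2 : Tendsto (fun N : ℕ => ∫ w in Set.Ioc (-(s/2)) (s/2),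
      ((corrBoxCount x (m+1) N (fun _ => -(s/2) - w) (fun _ => s/2 - w) : ℕ) : ℝ)/N ∂volume)
      atTop (nhds (∫ w in Set.Ioc (-(s/2)) (s/2), (s^m : ℝ) ∂volume)) := by
    apply MeasureTheory.tendsto_integral_of_dominated_convergence (bound := fun _ => C)
    · intro N
      apply Measurable.aestronglyMeasurable
      have heq : (fun w : ℝ =>
          ((corrBoxCount x (m+1) N (fun _ => -(s/2) - w) (fun _ => s/2 - w) : ℕ) : ℝ)/N)
          = fun w : ℝ => (∑ i ∈ A N,
              (if ∀ r : Fin m,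
                  (N:ℝ) * sdist (x (i 0) - x (i r.succ)) ∈ Set.Icc (-(s/2) - w) (s/2 - w)
                then (1:ℝ) else 0))/N := by
        funext w
        rw [corrBox_as_sum]
      rw [heq]
      apply Measurable.div_const
      apply Finset.measurable_sum
      intro i _
      exact Measurable.ite (hmeas2 N i) measurable_const measurable_const
    · exact MeasureTheory.integrableOn_const measure_Ioc_lt_top.ne
    · intro N
      rw [MeasureTheory.ae_restrict_iff' measurableSet_Ioc]
      apply MeasureTheory.ae_of_all
      intro w hw
      rw [Real.norm_eq_abs, abs_of_nonneg (by positivity)]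
      exact le_trans (hmono N w hw) (hC N)
    · apply MeasureTheory.ae_of_all
      intro w
      have h := hP (fun _ => -(s/2) - w) (fun _ => s/2 - w)
        (fun r => by show -(s/2) - w ≤ s/2 - w; linarith)
      have hval : (∏ r : Fin (m+1-1),
          ((fun _ : Fin (m+1-1) => s/2 - w) r - (fun _ : Fin (m+1-1) => -(s/2) - w) r)) = s^m := by
        rw [Finset.prod_const]
        have h1 : (s/2 - w) - (-(s/2) - w) = s := by ring
        rw [h1, Finset.card_univ, Fintype.card_fin, Nat.add_sub_cancel]
      rw [hval] at h
      exact h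
  have hval2 : (∫ w in Set.Ioc (-(s/2)) (s/2), (s^m : ℝ) ∂volume) = s^(m+1) := by
    rw [MeasureTheory.setIntegral_const, Real.volume_real_Ioc_of_le hle, smul_eq_mul]
    have h1 : s/2 - (-(s/2)) = s := by ring
    rw [h1, ← pow_succ']
  rw [hval2] at hlim2
  have hlim3 : Tendsto (fun N : ℕ => ∫ w in (-(s/2))..(s/2),
      ((corrBoxCount x (m+1) N (fun _ => -(s/2) - w) (fun _ => s/2 - w) : ℕ) : ℝ)/N)
      atTop (nhds (s^(m+1))) := by
    refine hlim2.congr fun N => ?_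
    exact (intervalIntegral.integral_of_le hle).symm
  apply hlim3.congr'
  filter_upwards [eventually_ge_atTop (⌈4*s⌉₊ + 1)] with N hN
  have hN0 : 0 < N := by omega
  have hceil : (⌈4*s⌉₊ : ℝ) ≤ N := by exact_mod_cast (by omega : ⌈4*s⌉₊ ≤ N)
  have h4s : 4*s ≤ (N:ℝ) := le_trans (Nat.le_ceil _) hceil
  have hd8 : s/(2*(N:ℝ)) ≤ 1/8 := by
    rw [div_le_iff₀ (by positivity)]
    linarith
  exact (key N hN0 hd8).symm
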